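/- In any triangle with sides a, b, c, circumradius R, and inradius r, a²/(b+c−a) + b²/(c+a−b) + c²/(a+b−c) ≥ 3R·√(4 − 9r/(4R + r)). -/

import Mathlib

theorem application_four_amgm_aux (x y z : ℝ) (hx : 0 < x) (hy : 0 < y) (hz : 0 < z) :
    8 * (x * y * z) ≤ (y + z) * (z + x) * (x + y) := by
  nlinarith [mul_nonneg hx.le (sq_nonneg (y - z)), mul_nonneg hy.le (sq_nonneg (z - x)),
    mul_nonneg hz.le (sq_nonneg (x - y))]

theorem application_four_schur_aux (x y z : ℝ) (hx : 0 < x) (hy : 0 < y) (hz : 0 < z) :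
    4 * ((y + z) * (z + x) * (x + y)) ≤ (x + y + z) ^ 3 + 5 * (x * y * z) := by
  nlinarith [mul_nonneg hx.le (sq_nonneg (x - y)), mul_nonneg hy.le (sq_nonneg (y - z)),
    mul_nonneg hz.le (sq_nonneg (z - x)), mul_nonneg hx.le (sq_nonneg (x - z)),
    mul_nonneg hy.le (sq_nonneg (x - y)), mul_nonneg hz.le (sq_nonneg (y - z))]

theorem application_four (a b c : ℝ) (ha : 0 < a) (hb : 0 < b) (hc : 0 < c)
    (hA : a < b + c) (hB : b < c + a) (hC : c < a + b) (s S : ℝ) (hs : s = (a + b + c) / 2)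
    (hS : S = Real.sqrt (s * (s - a) * (s - b) * (s - c))) (R : ℝ) (hR : R = a * b * c / (4 * S)) (r : ℝ) (hr : r = S / s) :
    a ^ 2 / (b + c - a) + b ^ 2 / (c + a - b) + c ^ 2 / (a + b - c)
      ≥ 3 * R * Real.sqrt (4 - 9 * r / (4 * R + r)) := by
  have hx : 0 < s - a := by rw [hs]; linarith
  have hy : 0 < s - b := by rw [hs]; linarith
  have hz : 0 < s - c := by rw [hs]; linarith
  have hsp : 0 < s := by rw [hs]; linarith
  have hs0 : s ≠ 0 := hsp.ne'
  have hprod : 0 < s * (s - a) * (s - b) * (s - c) := by positivity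
  have hSpos : 0 < S := by rw [hS]; exact Real.sqrt_pos.mpr hprod
  have hS0 : S ≠ 0 := hSpos.ne'
  have hS2 : S ^ 2 = s * (s - a) * (s - b) * (s - c) := by
    rw [hS]; exact Real.sq_sqrt hprod.le
  have hRpos : 0 < R := by rw [hR]; positivity
  have hrpos : 0 < r := by rw [hr]; positivity
  have hR0 : R ≠ 0 := hRpos.ne'
  have hr0 : r ≠ 0 := hrpos.ne'
  have hrs : r * s = S := by rw [hr]; field_simp
  have hr2' : s * (r ^ 2 * s) = s * ((s - a) * (s - b) * (s - c)) := by
    linear_combination (r * s + S) * hrs + hS2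
  have hr2 : r ^ 2 * s = (s - a) * (s - b) * (s - c) := mul_left_cancel₀ hs0 hr2'
  have hRr : 4 * (R * r) * s = a * b * c := by
    rw [hR, hr]; field_simp
  -- Euler: R ≥ 2r
  have h8 : 8 * ((s - a) * (s - b) * (s - c)) ≤ a * b * c := by
    rw [hs]
    have h := application_four_amgm_aux ((b + c - a) / 2) ((c + a - b) / 2) ((a + b - c) / 2)
      (by linarith) (by linarith) (by linarith)
    linarith [h]
  have h9 : 8 * (r ^ 2 * s) ≤ 4 * (R * r) * s := by rw [hr2, hRr]; exact h8
  have euler : 2 * r ≤ R := by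
    nlinarith [h9, mul_pos hrpos hsp]
  -- Gerretsen: s^2 ≥ 16Rr - 5r^2, via Schur
  have schur : 4 * (a * b * c) ≤ s ^ 3 + 5 * ((s - a) * (s - b) * (s - c)) := by
    rw [hs]
    have h := application_four_schur_aux ((b + c - a) / 2) ((c + a - b) / 2) ((a + b - c) / 2)
      (by linarith) (by linarith) (by linarith)
    linarith [h]
  have hger1 : 16 * R * r * s ≤ s ^ 3 + 5 * (r ^ 2 * s) := by
    calc 16 * R * r * s = 4 * (a * b * c) := by linear_combination 4 * hRr
      _ ≤ s ^ 3 + 5 * ((s - a) * (s - b) * (s - c)) := schur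
      _ = s ^ 3 + 5 * (r ^ 2 * s) := by rw [hr2]
  have ger : 16 * R * r ≤ s ^ 2 + 5 * r ^ 2 := by
    have hger2 : 16 * R * r * s ≤ (s ^ 2 + 5 * r ^ 2) * s := by linarith [hger1]
    exact le_of_mul_le_mul_right hger2 hsp
  have hRmr : 0 < R - r := by linarith
  have h4Rr : 0 < 4 * R + r := by linarith
  have h16 : 0 < 16 * R - 5 * r := by linarith
  -- core polynomial inequality
  have core : (16 * R - 5 * r) * (3 * R * r) ^ 2 ≤ (2 * s * (R - r)) ^ 2 * (4 * R + r) := by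
    have hq : 0 ≤ 16 * R ^ 2 - 5 * R * r - 2 * r ^ 2 := by
      have p1 : 0 ≤ (R - 2 * r) * R := mul_nonneg (by linarith) hRpos.le
      have p2 : 0 ≤ (R - 2 * r) * r := mul_nonneg (by linarith) hrpos.le
      nlinarith [p1, p2, sq_nonneg r]
    have t1 : 0 ≤ 4 * (R - r) ^ 2 * (4 * R + r) * (s ^ 2 + 5 * r ^ 2 - 16 * R * r) :=
      mul_nonneg (by positivity) (by linarith)
    have t2 : 0 ≤ r * (16 * R - 5 * r) * ((R - 2 * r) * (16 * R ^ 2 - 5 * R * r - 2 * r ^ 2)) :=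
      mul_nonneg (by positivity) (mul_nonneg (by linarith) hq)
    have exp : (2 * s * (R - r)) ^ 2 * (4 * R + r) - (16 * R - 5 * r) * (3 * R * r) ^ 2
        = 4 * (R - r) ^ 2 * (4 * R + r) * (s ^ 2 + 5 * r ^ 2 - 16 * R * r)
          + r * (16 * R - 5 * r) * ((R - 2 * r) * (16 * R ^ 2 - 5 * R * r - 2 * r ^ 2)) := by
      ring
    linarith [exp, t1, t2]
  -- identity for the LHS
  have hid0 : a ^ 2 / (b + c - a) + b ^ 2 / (c + a - b) + c ^ 2 / (a + b - c)
      = s * (a * b * c - 4 * ((s - a) * (s - b) * (s - c))) / (2 * ((s - a) * (s - b) * (s - c))) := by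
    rw [hs]
    have h1 : b + c - a ≠ 0 := by linarith
    have h2 : c + a - b ≠ 0 := by linarith
    have h3 : a + b - c ≠ 0 := by linarith
    have h4 : (a + b + c) / 2 - a ≠ 0 := by intro h; apply h1; linarith
    have h5 : (a + b + c) / 2 - b ≠ 0 := by intro h; apply h2; linarith
    have h6 : (a + b + c) / 2 - c ≠ 0 := by intro h; apply h3; linarith
    have hden : 2 * (((a + b + c) / 2 - a) * ((a + b + c) / 2 - b) * ((a + b + c) / 2 - c)) ≠ 0 :=
      mul_ne_zero two_ne_zero (mul_ne_zero (mul_ne_zero h4 h5) h6)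
    rw [div_add_div _ _ h1 h2, div_add_div _ _ (mul_ne_zero h1 h2) h3,
      div_eq_div_iff (mul_ne_zero (mul_ne_zero h1 h2) h3) hden]
    ring
  have hid2 : 2 * s * (R - r) / r
      = s * (a * b * c - 4 * ((s - a) * (s - b) * (s - c))) / (2 * ((s - a) * (s - b) * (s - c))) := by
    rw [div_eq_div_iff hr0 (by positivity)]
    linear_combination (s * r) * hRr + (-(4 * s * R)) * hr2
  -- the sqrt bound
  have hEeq : 4 - 9 * r / (4 * R + r) = (16 * R - 5 * r) / (4 * R + r) := by
    rw [eq_div_iff h4Rr.ne', sub_mul, div_mul_cancel₀ _ h4Rr.ne']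
    ring
  have hMnn : 0 ≤ 2 * s * (R - r) / (3 * R * r) := by positivity
  have key : Real.sqrt ((16 * R - 5 * r) / (4 * R + r)) ≤ 2 * s * (R - r) / (3 * R * r) := by
    rw [show 2 * s * (R - r) / (3 * R * r) = Real.sqrt ((2 * s * (R - r) / (3 * R * r)) ^ 2) from
      (Real.sqrt_sq hMnn).symm]
    apply Real.sqrt_le_sqrt
    rw [div_pow, div_le_div_iff₀ h4Rr (by positivity)]
    exact core
  rw [ge_iff_le, hid0, ← hid2, hEeq]
  calc 3 * R * Real.sqrt ((16 * R - 5 * r) / (4 * R + r))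
      ≤ 3 * R * (2 * s * (R - r) / (3 * R * r)) := by
        apply mul_le_mul_of_nonneg_left key (by positivity)
    _ = 2 * s * (R - r) / r := by field_simp
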